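/- arXiv:1707.07787 — 12 statements merged into one kernel-verified Lean document; each statement's English description precedes it below -/
import Mathlib

section
/- For every y ∈ ℝ^m and p > 0, ψ_γ(y) = min over v ∈ ℝ^m of (‖v‖₀ + γ‖y − v‖_p^p), where ‖z‖_p^p = Σ_i |z_i|^p; in particular the minimum is attained. -/
open Filter Topology

noncomputable def l2 {n : ℕ} (x : Fin n → ℝ) : ℝ := Real.sqrt (∑ i, (x i)^2)

noncomputable def l0 {m : ℕ} (y : Fin m → ℝ) : ℕ :=
  (Finset.univ.filter fun i => y i ≠ 0).card

lemma l0_sum {m : ℕ} (v : Fin m → ℝ) :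
    (l0 v : ℝ) = ∑ i, (if v i = 0 then (0:ℝ) else 1) := by
  unfold l0
  rw [Finset.card_filter]
  push_cast
  congr 1
  ext i
  by_cases h : v i = 0 <;> simp [h]

/-- `ψ_γ(y)` equals the minimum over `v ∈ ℝ^m` of `‖v‖₀ + γ‖y − v‖_p^p`, attained. -/
theorem capped_lp_split (m : ℕ) (γ p : ℝ) (hγ : 0 < γ) (hp : 0 < p) (y : Fin m → ℝ) :
    IsLeast {r : ℝ | ∃ v : Fin m → ℝ, r = (l0 v : ℝ) + γ * ∑ i, |y i - v i| ^ p}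
      (∑ i, min (γ * |y i| ^ p) 1) := by
  have key : ∀ v : Fin m → ℝ, (l0 v : ℝ) + γ * ∑ i, |y i - v i| ^ p
      = ∑ i, ((if v i = 0 then (0:ℝ) else 1) + γ * |y i - v i| ^ p) := by
    intro v
    rw [l0_sum, Finset.sum_add_distrib, Finset.mul_sum]
  constructor
  · refine ⟨fun i => if γ * |y i| ^ p < 1 then 0 else y i, ?_⟩
    rw [key]
    apply Finset.sum_congr rfl
    intro i _
    by_cases h : γ * |y i| ^ p < 1
    · simp only [h, if_true, sub_zero]
      rw [min_eq_left h.le]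
      by_cases h0 : (0:ℝ) = 0 <;> simp
    · simp only [h, if_false, sub_self, abs_zero]
      rw [Real.zero_rpow hp.ne', min_eq_right (not_lt.mp h)]
      have hy : y i ≠ 0 := by
        intro h0
        apply h
        rw [h0, abs_zero, Real.zero_rpow hp.ne', mul_zero]
        norm_num
      simp [hy]
  · rintro r ⟨v, rfl⟩
    rw [key]
    apply Finset.sum_le_sum
    intro i _
    by_cases h : v i = 0
    · simp only [h, if_true, sub_zero, zero_add]
      exact min_le_left _ _
    · simp only [h, if_false]
      have : (0:ℝ) ≤ γ * |y i - v i| ^ p :=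
        mul_nonneg hγ.le (Real.rpow_nonneg (abs_nonneg _) _)
      calc min (γ * |y i| ^ p) 1 ≤ 1 := min_le_right _ _
        _ ≤ 1 + γ * |y i - v i| ^ p := by linarith
end

section
/- Let A be a t × n real matrix, b ∈ ℝ^t, and k a nonnegative integer. Then the set O = {x ∈ ℝ^n : ‖Ax − b‖₀ ≤ k} is either empty or asymptotically linear. -/
open Filter Topology

/-- A nonempty closed set `C` is asymptotically linear. -/
def AsympLinear {n : ℕ} (C : Set (Fin n → ℝ)) : Prop :=
  C.Nonempty ∧ IsClosed C ∧
  ∀ ρ : ℝ, 0 < ρ → ∀ (x : ℕ → Fin n → ℝ) (xb : Fin n → ℝ),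
    (∀ k, x k ∈ C) →
    Tendsto (fun k => l2 (x k)) atTop atTop →
    Tendsto (fun k => (l2 (x k))⁻¹ • x k) atTop (𝓝 xb) →
    ∃ k0 : ℕ, ∀ k ≥ k0, x k - ρ • xb ∈ C

lemma l0_sublevel_closed (t k : ℕ) : IsClosed {y : Fin t → ℝ | l0 y ≤ k} := by
  have heq : {y : Fin t → ℝ | l0 y ≤ k} =
      ⋃ S ∈ {S : Finset (Fin t) | S.card ≤ k}, {y | ∀ i, i ∉ S → y i = 0} := by
    ext y
    simp only [Set.mem_setOf_eq, Set.mem_iUnion, exists_prop]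
    constructor
    · intro h
      refine ⟨Finset.univ.filter fun i => y i ≠ 0, h, fun i hi => ?_⟩
      by_contra hne
      exact hi (Finset.mem_filter.2 ⟨Finset.mem_univ _, hne⟩)
    · rintro ⟨S, hS, hsupp⟩
      refine le_trans (Finset.card_le_card ?_) hS
      intro i hi
      rw [Finset.mem_filter] at hi
      by_contra h
      exact hi.2 (hsupp i h)
  rw [heq]
  refine Set.Finite.isClosed_biUnion (Set.toFinite _) fun S _ => ?_
  have : {y : Fin t → ℝ | ∀ i, i ∉ S → y i = 0} = ⋂ i, {y | i ∉ S → y i = 0} := by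
    ext y; simp [Set.mem_iInter]
  rw [this]
  refine isClosed_iInter fun i => ?_
  by_cases hi : i ∈ S
  · simp [hi]
  · have : {y : Fin t → ℝ | i ∉ S → y i = 0} = {y | y i = 0} := by
      ext y; simp [hi]
    rw [this]
    exact isClosed_eq (continuous_apply i) continuous_const

/-- `{x : ‖Ax − b‖₀ ≤ k}` is either empty or asymptotically linear. -/
theorem l0_sublevel_asympLinear (t n : ℕ) (A : Matrix (Fin t) (Fin n) ℝ)
    (b : Fin t → ℝ) (k : ℕ) :
    {x : Fin n → ℝ | l0 (A.mulVec x - b) ≤ k} = ∅ ∨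
      AsympLinear {x : Fin n → ℝ | l0 (A.mulVec x - b) ≤ k} := by
  set C := {x : Fin n → ℝ | l0 (A.mulVec x - b) ≤ k} with hC
  rcases Set.eq_empty_or_nonempty C with h | h
  · exact Or.inl h
  · refine Or.inr ⟨h, ?_, ?_⟩
    · have hcont : Continuous fun x : Fin n → ℝ => A.mulVec x - b := by
        have : Continuous fun x : Fin n → ℝ => A.mulVec x :=
          LinearMap.continuous_of_finiteDimensional A.mulVecLin
        exact this.sub continuous_const
      have : C = (fun x : Fin n → ℝ => A.mulVec x - b) ⁻¹' {y | l0 y ≤ k} := rfl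
      rw [this]
      exact (l0_sublevel_closed t k).preimage hcont
    · intro ρ hρ x xb hxC hl2 hdir
      -- A.mulVec composed with the normalized sequence tends to A.mulVec xb
      have hcontA : Continuous fun v : Fin n → ℝ => A.mulVec v :=
        LinearMap.continuous_of_finiteDimensional A.mulVecLin
      have hAdir : Tendsto (fun j => A.mulVec ((l2 (x j))⁻¹ • x j)) atTop
          (𝓝 (A.mulVec xb)) := hcontA.continuousAt.tendsto.comp hdir
      have hEv : ∀ᶠ j in atTop, ∀ i, A.mulVec xb i ≠ 0 → (A.mulVec (x j) - b) i ≠ 0 := by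
        rw [eventually_all]
        intro i
        by_cases hc : A.mulVec xb i ≠ 0
        · have hgi : Tendsto (fun j => A.mulVec ((l2 (x j))⁻¹ • x j) i) atTop
              (𝓝 (A.mulVec xb i)) := (continuous_apply i).continuousAt.tendsto.comp hAdir
          set c := A.mulVec xb i with hc'
          have hcpos : 0 < |c| := abs_pos.2 hc
          have h1 : ∀ᶠ j in atTop, |c| / 2 ≤ |A.mulVec ((l2 (x j))⁻¹ • x j) i| := by
            have habs : Tendsto (fun j => |A.mulVec ((l2 (x j))⁻¹ • x j) i|) atTop
                (𝓝 |c|) := hgi.abs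
            exact habs.eventually (eventually_ge_nhds (by linarith))
          have h2 : ∀ᶠ j in atTop, (|b i| + 1) * 2 / |c| ≤ l2 (x j) :=
            hl2.eventually_ge_atTop _
          have h3 : ∀ᶠ j in atTop, (0:ℝ) < l2 (x j) := hl2.eventually_gt_atTop 0
          filter_upwards [h1, h2, h3] with j hj1 hj2 hj3 _
          have hne : l2 (x j) ≠ 0 := ne_of_gt hj3
          have hx : A.mulVec (x j) i = l2 (x j) * A.mulVec ((l2 (x j))⁻¹ • x j) i := by
            rw [Matrix.mulVec_smul]
            simp [Pi.smul_apply, smul_eq_mul]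
            try field_simp
          have hlb : |b i| + 1 ≤ |A.mulVec (x j) i| := by
            rw [hx, abs_mul, abs_of_pos hj3]
            calc |b i| + 1 = ((|b i| + 1) * 2 / |c|) * (|c| / 2) := by
                  field_simp
              _ ≤ l2 (x j) * |A.mulVec ((l2 (x j))⁻¹ • x j) i| := by
                  apply mul_le_mul hj2 hj1 (by positivity) (le_of_lt hj3)
          intro hzero
          have : A.mulVec (x j) i = b i := by
            have := sub_eq_zero.mp hzero
            simpa using this
          rw [this] at hlb
          linarith
        · simp only [not_not] at hc
          filter_upwards with j hi
          exact absurd hc hi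
      rcases eventually_atTop.1 hEv with ⟨k0, hk0⟩
      refine ⟨k0, fun j hj => ?_⟩
      have hmem := hxC j
      simp only [hC, Set.mem_setOf_eq] at hmem ⊢
      refine le_trans (le_trans (Finset.card_le_card ?_) le_rfl) hmem
      intro i hi
      rw [Finset.mem_filter] at hi ⊢
      refine ⟨Finset.mem_univ _, fun hzero => ?_⟩
      have hxb : A.mulVec xb i = 0 := by
        by_contra hne
        exact hk0 j hj i hne hzero
      apply hi.2
      have : (A.mulVec (x j - ρ • xb) - b) i
          = (A.mulVec (x j) - b) i - ρ * A.mulVec xb i := by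
        rw [Matrix.mulVec_sub, Matrix.mulVec_smul]
        simp [Pi.sub_apply, Pi.smul_apply, smul_eq_mul]
        ring
      rw [this, hzero, hxb]
      ring
end

section
/- Let C₁ ⊆ ℝ^n and C₂ ⊆ ℝ^m be asymptotically linear sets. Then the product C₁ × C₂ ⊆ ℝ^n × ℝ^m is asymptotically linear. -/
open Filter Topology

noncomputable def l2Pair {n m : ℕ} (z : (Fin n → ℝ) × (Fin m → ℝ)) : ℝ :=
  Real.sqrt (l2 z.1 ^ 2 + l2 z.2 ^ 2)

def AsympLinearPair {n m : ℕ} (C : Set ((Fin n → ℝ) × (Fin m → ℝ))) : Prop :=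
  C.Nonempty ∧ IsClosed C ∧
  ∀ ρ : ℝ, 0 < ρ → ∀ (z : ℕ → (Fin n → ℝ) × (Fin m → ℝ)) (zb : (Fin n → ℝ) × (Fin m → ℝ)),
    (∀ k, z k ∈ C) →
    Tendsto (fun k => l2Pair (z k)) atTop atTop →
    Tendsto (fun k => (l2Pair (z k))⁻¹ • z k) atTop (𝓝 zb) →
    ∃ k0 : ℕ, ∀ k ≥ k0, z k - ρ • zb ∈ C

lemma l2_continuous {n : ℕ} : Continuous (l2 (n := n)) := by
  unfold l2; fun_prop

lemma l2_nonneg {n : ℕ} (x : Fin n → ℝ) : 0 ≤ l2 x := Real.sqrt_nonneg _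

lemma l2_smul {n : ℕ} (c : ℝ) (x : Fin n → ℝ) : l2 (c • x) = |c| * l2 x := by
  unfold l2
  rw [← Real.sqrt_sq_eq_abs, ← Real.sqrt_mul (sq_nonneg c), Finset.mul_sum]
  congr 1
  exact Finset.sum_congr rfl fun i _ => by simp [mul_pow]

lemma l2_eq_zero {n : ℕ} {x : Fin n → ℝ} (h : l2 x = 0) : x = 0 := by
  unfold l2 at h
  have h2 := (Real.sqrt_eq_zero (Finset.sum_nonneg fun i _ => sq_nonneg (x i))).mp h
  funext i
  have h3 := (Finset.sum_eq_zero_iff_of_nonneg (fun i _ => sq_nonneg (x i))).mp h2 i (Finset.mem_univ i)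
  simpa using pow_eq_zero_iff (n := 2) (by norm_num) |>.mp h3

/-- Key component lemma. -/
lemma asympLinear_component {n : ℕ} {C : Set (Fin n → ℝ)} (h : AsympLinear C)
    (ρ : ℝ) (hρ : 0 < ρ) (x : ℕ → Fin n → ℝ) (xb : Fin n → ℝ) (w : ℕ → ℝ)
    (hx : ∀ k, x k ∈ C) (hw : Tendsto w atTop atTop)
    (hn : Tendsto (fun k => (w k)⁻¹ • x k) atTop (𝓝 xb)) :
    ∃ k0 : ℕ, ∀ k ≥ k0, x k - ρ • xb ∈ C := by
  by_cases hxb : xb = 0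
  · exact ⟨0, fun k _ => by simpa [hxb] using hx k⟩
  · set a := l2 xb with ha
    have ha0 : 0 < a := by
      rcases lt_or_eq_of_le (l2_nonneg xb) with h' | h'
      · exact h'
      · exact absurd (l2_eq_zero h'.symm) hxb
    have hwpos : ∀ᶠ k in atTop, 0 < w k := hw.eventually_gt_atTop 0
    -- l2 ((w k)⁻¹ • x k) → a
    have hla : Tendsto (fun k => l2 ((w k)⁻¹ • x k)) atTop (𝓝 a) :=
      (l2_continuous.tendsto xb).comp hn
    -- rewrite eventually as (w k)⁻¹ * l2 (x k)
    have heq : ∀ᶠ k in atTop, l2 ((w k)⁻¹ • x k) = (w k)⁻¹ * l2 (x k) := by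
      filter_upwards [hwpos] with k hk
      rw [l2_smul, abs_of_pos (inv_pos.mpr hk)]
    have hla' : Tendsto (fun k => (w k)⁻¹ * l2 (x k)) atTop (𝓝 a) :=
      hla.congr' heq
    -- l2 (x k) → ∞
    have hlx : Tendsto (fun k => l2 (x k)) atTop atTop := by
      have : Tendsto (fun k => w k * ((w k)⁻¹ * l2 (x k))) atTop atTop :=
        hw.atTop_mul_pos ha0 hla'
      refine this.congr' ?_
      filter_upwards [hwpos] with k hk
      rw [← mul_assoc, mul_inv_cancel₀ hk.ne', one_mul]
    have hlxpos : ∀ᶠ k in atTop, 0 < l2 (x k) := hlx.eventually_gt_atTop 0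
    -- normalized convergence
    have hnorm : Tendsto (fun k => (l2 (x k))⁻¹ • x k) atTop (𝓝 (a⁻¹ • xb)) := by
      have hlim : Tendsto (fun k => ((w k)⁻¹ * l2 (x k))⁻¹ • ((w k)⁻¹ • x k))
          atTop (𝓝 (a⁻¹ • xb)) := (hla'.inv₀ ha0.ne').smul hn
      refine hlim.congr' ?_
      filter_upwards [hwpos, hlxpos] with k hk hk2
      rw [smul_smul]
      congr 1
      field_simp
    obtain ⟨k0, hk0⟩ := h.2.2 (ρ * a) (mul_pos hρ ha0) x (a⁻¹ • xb) hx hlx hnorm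
    refine ⟨k0, fun k hk => ?_⟩
    have := hk0 k hk
    rwa [smul_smul, mul_assoc, mul_inv_cancel₀ ha0.ne', mul_one] at this

/-- The product of two asymptotically linear sets is asymptotically linear. -/
theorem asympLinear_prod (n m : ℕ) (C₁ : Set (Fin n → ℝ)) (C₂ : Set (Fin m → ℝ))
    (h1 : AsympLinear C₁) (h2 : AsympLinear C₂) :
    AsympLinearPair (C₁ ×ˢ C₂) := by
  obtain ⟨⟨a1, ha1⟩, hc1, _⟩ := id h1
  obtain ⟨⟨a2, ha2⟩, hc2, _⟩ := id h2
  refine ⟨⟨(a1, a2), ⟨ha1, ha2⟩⟩, hc1.prod hc2, ?_⟩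
  intro ρ hρ z zb hz hw hnorm
  have hz1 : ∀ k, (z k).1 ∈ C₁ := fun k => (hz k).1
  have hz2 : ∀ k, (z k).2 ∈ C₂ := fun k => (hz k).2
  have hn1 : Tendsto (fun k => (l2Pair (z k))⁻¹ • (z k).1) atTop (𝓝 zb.1) :=
    (continuous_fst.tendsto zb).comp hnorm
  have hn2 : Tendsto (fun k => (l2Pair (z k))⁻¹ • (z k).2) atTop (𝓝 zb.2) :=
    (continuous_snd.tendsto zb).comp hnorm
  obtain ⟨k1, hk1⟩ := asympLinear_component h1 ρ hρ (fun k => (z k).1) zb.1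
    (fun k => l2Pair (z k)) hz1 hw hn1
  obtain ⟨k2, hk2⟩ := asympLinear_component h2 ρ hρ (fun k => (z k).2) zb.2
    (fun k => l2Pair (z k)) hz2 hw hn2
  refine ⟨max k1 k2, fun k hk => ?_⟩
  exact ⟨hk1 k (le_trans (le_max_left _ _) hk), hk2 k (le_trans (le_max_right _ _) hk)⟩
end

section
/- Let A ∈ ℝ^{t×n} and let C' ⊂ ℝ^t be a nonempty closed bounded set. Then the set C = {x ∈ ℝ^n : Ax ∈ C'} is either empty or asymptotically linear. In particular, for any sequence {x^k} ⊆ C with ‖x^k‖₂ → +∞ and x^k/‖x^k‖₂ → x̄ one has Ax̄ = 0. -/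
open Filter Topology

lemma mulVec_cont (t n : ℕ) (A : Matrix (Fin t) (Fin n) ℝ) :
    Continuous (fun x : Fin n → ℝ => A.mulVec x) :=
  LinearMap.continuous_of_finiteDimensional A.mulVecLin

lemma key (t n : ℕ) (A : Matrix (Fin t) (Fin n) ℝ)
    (C' : Set (Fin t → ℝ)) (hbd : Bornology.IsBounded C') :
    ∀ (x : ℕ → Fin n → ℝ) (xb : Fin n → ℝ),
      (∀ k, A.mulVec (x k) ∈ C') →
      Tendsto (fun k => l2 (x k)) atTop atTop →
      Tendsto (fun k => (l2 (x k))⁻¹ • x k) atTop (𝓝 xb) →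
      A.mulVec xb = 0 := by
  intro x xb hmem hdiv hlim
  obtain ⟨M, hM⟩ := hbd.exists_norm_le
  have h1 : Tendsto (fun k => A.mulVec ((l2 (x k))⁻¹ • x k)) atTop (𝓝 (A.mulVec xb)) :=
    ((mulVec_cont t n A).continuousAt).tendsto.comp hlim
  have h2 : ∀ k, A.mulVec ((l2 (x k))⁻¹ • x k) = (l2 (x k))⁻¹ • A.mulVec (x k) := by
    intro k; rw [Matrix.mulVec_smul]
  have hinv : Tendsto (fun k => (l2 (x k))⁻¹) atTop (𝓝 0) := hdiv.inv_tendsto_atTop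
  have h3 : Tendsto (fun k => A.mulVec ((l2 (x k))⁻¹ • x k)) atTop (𝓝 0) := by
    apply squeeze_zero_norm (a := fun k => |(l2 (x k))⁻¹| * M)
    · intro k
      rw [h2 k, norm_smul]
      exact mul_le_mul_of_nonneg_left (hM _ (hmem k)) (abs_nonneg _)
    · have : Tendsto (fun k => |(l2 (x k))⁻¹|) atTop (𝓝 0) := by
        simpa using hinv.abs
      simpa using this.mul_const M
  exact tendsto_nhds_unique h1 h3

/-- For `C' ⊂ ℝ^t` nonempty closed bounded, `C = {x : Ax ∈ C'}` is empty or asymptotically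
linear; moreover any diverging sequence in `C` with normalized limit `x̄` satisfies `A x̄ = 0`. -/
theorem preimage_bounded_asympLinear (t n : ℕ) (A : Matrix (Fin t) (Fin n) ℝ)
    (C' : Set (Fin t → ℝ)) (hne : C'.Nonempty) (hcl : IsClosed C')
    (hbd : Bornology.IsBounded C') :
    ({x : Fin n → ℝ | A.mulVec x ∈ C'} = ∅ ∨
      AsympLinear {x : Fin n → ℝ | A.mulVec x ∈ C'}) ∧
    ∀ (x : ℕ → Fin n → ℝ) (xb : Fin n → ℝ),
      (∀ k, A.mulVec (x k) ∈ C') →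
      Tendsto (fun k => l2 (x k)) atTop atTop →
      Tendsto (fun k => (l2 (x k))⁻¹ • x k) atTop (𝓝 xb) →
      A.mulVec xb = 0 := by
  refine ⟨?_, key t n A C' hbd⟩
  by_cases h : {x : Fin n → ℝ | A.mulVec x ∈ C'} = ∅
  · exact Or.inl h
  · refine Or.inr ⟨Set.nonempty_iff_ne_empty.mpr h, hcl.preimage (mulVec_cont t n A), ?_⟩
    intro ρ hρ x xb hmem hdiv hlim
    have hxb : A.mulVec xb = 0 := key t n A C' hbd x xb hmem hdiv hlim
    refine ⟨0, fun k _ => ?_⟩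
    show A.mulVec (x k - ρ • xb) ∈ C'
    rw [Matrix.mulVec_sub, Matrix.mulVec_smul, hxb, smul_zero, sub_zero]
    exact hmem k
end

section
/- The union of finitely many asymptotically linear subsets of ℝ^n is asymptotically linear. -/
open Filter Topology

/-- The union of finitely many asymptotically linear subsets of ℝ^n is asymptotically linear. -/
theorem asympLinear_finite_union (n : ℕ) (ι : Type) (S : Finset ι) (hS : S.Nonempty)
    (C : ι → Set (Fin n → ℝ)) (hC : ∀ i ∈ S, AsympLinear (C i)) :
    AsympLinear (⋃ i ∈ S, C i) := by
  obtain ⟨i0, hi0⟩ := hS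
  refine ⟨?_, ?_, ?_⟩
  · obtain ⟨c, hc⟩ := (hC i0 hi0).1
    exact ⟨c, Set.mem_biUnion hi0 hc⟩
  · exact Set.Finite.isClosed_biUnion S.finite_toSet (fun i hi => (hC i hi).2.1)
  · intro ρ hρ x xb hx hl2 hnorm
    by_contra h
    push_neg at h
    have hfreq : ∃ᶠ k in atTop, x k - ρ • xb ∉ ⋃ i ∈ S, C i := by
      rw [Filter.frequently_atTop]
      intro a; obtain ⟨b, hb, hb'⟩ := h a; exact ⟨b, hb, hb'⟩
    obtain ⟨φ, hφ, hφP⟩ := Filter.extraction_of_frequently_atTop hfreq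
    have hmem : ∀ m : ℕ, ∃ i : {i // i ∈ S}, x (φ m) ∈ C i := by
      intro m
      obtain ⟨i, hi, hxi⟩ := Set.mem_iUnion₂.mp (hx (φ m))
      exact ⟨⟨i, hi⟩, hxi⟩
    choose g hg using hmem
    obtain ⟨i, hinf⟩ := Finite.exists_infinite_fiber g
    have hinf' : {m | g m = i}.Infinite := by
      exact Set.infinite_coe_iff.mp hinf
    have hfreq2 : ∃ᶠ m in atTop, g m = i :=
      Nat.frequently_atTop_iff_infinite.mpr hinf'
    obtain ⟨ψ, hψ, hψg⟩ := Filter.extraction_of_frequently_atTop hfreq2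
    set y : ℕ → Fin n → ℝ := fun m => x (φ (ψ m)) with hy
    have hyC : ∀ m, y m ∈ C i := by
      intro m
      have := hg (ψ m)
      rw [hψg m] at this
      exact this
    have hmono : StrictMono (fun m => φ (ψ m)) := hφ.comp hψ
    obtain ⟨k0, hk0⟩ := (hC i i.2).2.2 ρ hρ y xb hyC
      (hl2.comp hmono.tendsto_atTop)
      (hnorm.comp hmono.tendsto_atTop)
    exact hφP (ψ k0) (Set.mem_biUnion i.2 (hk0 k0 le_rfl))
end

section
/- Let A ∈ ℝ^{t×n}, b ∈ ℝ^t, λ > 0 and s ≥ 0. Then the set O = {(x, v) ∈ ℝ^n × ℝ^m : ‖Ax − b‖₀ + λ‖v‖₀ ≤ s} is either empty or asymptotically linear. -/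
open Filter Topology

lemma l0_mono' {m : ℕ} {y y' : Fin m → ℝ} (h : ∀ i, y i ≠ 0 → y' i ≠ 0) : l0 y ≤ l0 y' :=
  Finset.card_le_card (fun i hi => by
    simp only [Finset.mem_filter, Finset.mem_univ, true_and] at *
    exact h i hi)

/-- `O = {(x,v) : ‖Ax − b‖₀ + λ‖v‖₀ ≤ s}` is either empty or asymptotically linear. -/
theorem l0_pair_sublevel_asympLinear (t n m : ℕ) (A : Matrix (Fin t) (Fin n) ℝ)
    (b : Fin t → ℝ) (lam s : ℝ) (hlam : 0 < lam) (hs : 0 ≤ s) :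
    {z : (Fin n → ℝ) × (Fin m → ℝ) |
        (l0 (A.mulVec z.1 - b) : ℝ) + lam * (l0 z.2 : ℝ) ≤ s} = ∅ ∨
      AsympLinearPair {z : (Fin n → ℝ) × (Fin m → ℝ) |
        (l0 (A.mulVec z.1 - b) : ℝ) + lam * (l0 z.2 : ℝ) ≤ s} := by
  set C := {z : (Fin n → ℝ) × (Fin m → ℝ) |
      (l0 (A.mulVec z.1 - b) : ℝ) + lam * (l0 z.2 : ℝ) ≤ s} with hCdef
  by_cases hne : C = ∅
  · exact Or.inl hne
  right
  have hAc : Continuous (fun x : Fin n → ℝ => A.mulVec x) :=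
    A.mulVecLin.continuous_of_finiteDimensional
  refine ⟨Set.nonempty_iff_ne_empty.mpr hne, ?_, ?_⟩
  · -- closedness
    rw [← isOpen_compl_iff, isOpen_iff_mem_nhds]
    intro z hz
    simp only [Set.mem_compl_iff, hCdef, Set.mem_setOf_eq, not_le] at hz
    have h1 : ∀ᶠ z' in 𝓝 z, ∀ i : Fin t,
        (A.mulVec z.1 - b) i ≠ 0 → (A.mulVec z'.1 - b) i ≠ 0 := by
      rw [eventually_all]
      intro i
      by_cases hi : (A.mulVec z.1 - b) i ≠ 0
      · have hc : Continuous (fun z' : (Fin n → ℝ) × (Fin m → ℝ) => (A.mulVec z'.1 - b) i) := by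
          have : Continuous (fun z' : (Fin n → ℝ) × (Fin m → ℝ) => A.mulVec z'.1 - b) :=
            (hAc.comp continuous_fst).sub continuous_const
          exact (continuous_apply i).comp this
        filter_upwards [hc.continuousAt.eventually_ne hi] with z' h _
        exact h
      · filter_upwards with z' h
        exact absurd h hi
    have h2 : ∀ᶠ z' in 𝓝 z, ∀ j : Fin m, z.2 j ≠ 0 → z'.2 j ≠ 0 := by
      rw [eventually_all]
      intro j
      by_cases hj : z.2 j ≠ 0
      · have hc : Continuous (fun z' : (Fin n → ℝ) × (Fin m → ℝ) => z'.2 j) :=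
          (continuous_apply j).comp continuous_snd
        filter_upwards [hc.continuousAt.eventually_ne hj] with z' h _
        exact h
      · filter_upwards with z' h
        exact absurd h hj
    filter_upwards [h1, h2] with z' hz1 hz2
    simp only [Set.mem_compl_iff, hCdef, Set.mem_setOf_eq, not_le]
    refine lt_of_lt_of_le hz ?_
    have e1 : (l0 (A.mulVec z.1 - b) : ℝ) ≤ (l0 (A.mulVec z'.1 - b) : ℝ) :=
      Nat.cast_le.mpr (l0_mono' hz1)
    have e2 : (l0 z.2 : ℝ) ≤ (l0 z'.2 : ℝ) := Nat.cast_le.mpr (l0_mono' hz2)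
    exact add_le_add e1 (mul_le_mul_of_nonneg_left e2 hlam.le)
  · -- asymptotic linearity
    intro ρ hρ z zb hzC hr hu
    have hu1 : Tendsto (fun k => (l2Pair (z k))⁻¹ • (z k).1) atTop (𝓝 zb.1) :=
      (continuous_fst.tendsto zb).comp hu
    have hu2 : Tendsto (fun k => (l2Pair (z k))⁻¹ • (z k).2) atTop (𝓝 zb.2) :=
      (continuous_snd.tendsto zb).comp hu
    have hrinv : Tendsto (fun k => (l2Pair (z k))⁻¹) atTop (𝓝 0) :=
      tendsto_inv_atTop_zero.comp hr
    have hP : ∀ᶠ k in atTop, ∀ i : Fin t,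
        (A.mulVec ((z k).1 - ρ • zb.1) - b) i ≠ 0 → (A.mulVec (z k).1 - b) i ≠ 0 := by
      rw [eventually_all]
      intro i
      by_cases hi : A.mulVec zb.1 i = 0
      · filter_upwards with k h
        have he : (A.mulVec ((z k).1 - ρ • zb.1) - b) i = (A.mulVec (z k).1 - b) i := by
          simp [Matrix.mulVec_sub, Matrix.mulVec_smul, hi]
        rwa [he] at h
      · have t1 : Tendsto (fun k => A.mulVec ((l2Pair (z k))⁻¹ • (z k).1) i) atTop
            (𝓝 (A.mulVec zb.1 i)) :=
          (((continuous_apply i).comp hAc).tendsto zb.1).comp hu1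
        have t2 : Tendsto (fun k => b i * (l2Pair (z k))⁻¹) atTop (𝓝 0) := by
          simpa using (tendsto_const_nhds (x := b i)).mul hrinv
        have hlim : Tendsto (fun k =>
            A.mulVec ((l2Pair (z k))⁻¹ • (z k).1) i - b i * (l2Pair (z k))⁻¹) atTop
            (𝓝 (A.mulVec zb.1 i)) := by
          simpa using t1.sub t2
        filter_upwards [hlim.eventually_ne hi] with k hk _
        have he : A.mulVec ((l2Pair (z k))⁻¹ • (z k).1) i - b i * (l2Pair (z k))⁻¹
            = (l2Pair (z k))⁻¹ * ((A.mulVec (z k).1 - b) i) := by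
          simp [Matrix.mulVec_smul]
          ring
        rw [he] at hk
        exact right_ne_zero_of_mul hk
    have hQ : ∀ᶠ k in atTop, ∀ j : Fin m,
        ((z k).2 - ρ • zb.2) j ≠ 0 → (z k).2 j ≠ 0 := by
      rw [eventually_all]
      intro j
      by_cases hj : zb.2 j = 0
      · filter_upwards with k h
        simpa [hj] using h
      · have hlim : Tendsto (fun k => (l2Pair (z k))⁻¹ * (z k).2 j) atTop (𝓝 (zb.2 j)) := by
          have := ((continuous_apply j).tendsto zb.2).comp hu2
          simpa [Function.comp_def] using this
        filter_upwards [hlim.eventually_ne hj] with k hk _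
        exact right_ne_zero_of_mul hk
    obtain ⟨k0, hk0⟩ := eventually_atTop.mp (hP.and hQ)
    refine ⟨k0, fun k hk => ?_⟩
    obtain ⟨hPk, hQk⟩ := hk0 k hk
    have hzk := hzC k
    simp only [hCdef, Set.mem_setOf_eq] at hzk ⊢
    have hfst : (z k - ρ • zb).1 = (z k).1 - ρ • zb.1 := rfl
    have hsnd : (z k - ρ • zb).2 = (z k).2 - ρ • zb.2 := rfl
    rw [hfst, hsnd]
    have e1 : (l0 (A.mulVec ((z k).1 - ρ • zb.1) - b) : ℝ) ≤ (l0 (A.mulVec (z k).1 - b) : ℝ) :=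
      Nat.cast_le.mpr (l0_mono' hPk)
    have e2 : (l0 ((z k).2 - ρ • zb.2) : ℝ) ≤ (l0 (z k).2 : ℝ) :=
      Nat.cast_le.mpr (l0_mono' hQk)
    exact le_trans (add_le_add e1 (mul_le_mul_of_nonneg_left e2 hlam.le)) hzk
end

section
/- Let A ∈ ℝ^{t×n} and b ∈ ℝ^t, and consider any sequence {x^k} in ℝ^n with ‖x^k‖₂ → +∞ and x^k/‖x^k‖₂ → x̄. Then there exists k₀ such that for all k ≥ k₀ and all ρ > 0 appearing fixed in advance, ‖A(x^k − ρx̄) − b‖₀ ≤ ‖Ax^k − b‖₀. -/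
open Filter Topology

/-- For a diverging sequence with normalized limit `x̄` and fixed `ρ > 0`, eventually
`‖A(x^k − ρx̄) − b‖₀ ≤ ‖Ax^k − b‖₀`. -/
theorem l0_shift_eventually_le (t n : ℕ) (A : Matrix (Fin t) (Fin n) ℝ) (b : Fin t → ℝ)
    (x : ℕ → Fin n → ℝ) (xb : Fin n → ℝ)
    (h1 : Filter.Tendsto (fun k => l2 (x k)) Filter.atTop Filter.atTop)
    (h2 : Filter.Tendsto (fun k => (l2 (x k))⁻¹ • x k) Filter.atTop (𝓝 xb))
    (ρ : ℝ) (hρ : 0 < ρ) :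
    ∃ k0 : ℕ, ∀ k ≥ k0,
      l0 (A.mulVec (x k - ρ • xb) - b) ≤ l0 (A.mulVec (x k) - b) := by
  have hcont : Continuous fun v : Fin n → ℝ => A.mulVec v := by
    have := A.mulVecLin.continuous_of_finiteDimensional
    exact this
  have hc : Tendsto (fun k => A.mulVec ((l2 (x k))⁻¹ • x k)) atTop (𝓝 (A.mulVec xb)) :=
    (hcont.tendsto xb).comp h2
  -- for each i with (A xb) i ≠ 0, eventually (A x k - b) i ≠ 0
  have key : ∀ᶠ k in atTop, ∀ i, A.mulVec xb i ≠ 0 → A.mulVec (x k) i - b i ≠ 0 := by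
    rw [eventually_all]
    intro i
    by_cases hci : A.mulVec xb i = 0
    · filter_upwards with k h; exact absurd hci h
    · have hgi : Tendsto (fun k => (l2 (x k))⁻¹ * A.mulVec (x k) i) atTop
        (𝓝 (A.mulVec xb i)) := by
        have := (continuous_apply i).tendsto (A.mulVec xb) |>.comp hc
        simpa [Matrix.mulVec_smul, Function.comp_def] using this
      have habs : Tendsto (fun k => l2 (x k) * |(l2 (x k))⁻¹ * A.mulVec (x k) i|)
          atTop atTop :=
        Tendsto.atTop_mul_pos (abs_pos.2 hci) h1 hgi.abs
      have hAB : Tendsto (fun k => |A.mulVec (x k) i|) atTop atTop := by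
        refine habs.congr' ?_
        filter_upwards [h1.eventually_gt_atTop 0] with k hk
        rw [abs_mul, abs_inv, abs_of_pos hk]
        field_simp
      filter_upwards [hAB.eventually_gt_atTop (|b i|)] with k hk hci'
      intro h
      have : A.mulVec (x k) i = b i := by linarith [sub_eq_zero.mp h]
      rw [this] at hk
      exact lt_irrefl _ hk
  obtain ⟨k0, hk0⟩ := eventually_atTop.mp key
  refine ⟨k0, fun k hk => ?_⟩
  apply Finset.card_le_card
  intro i hi
  simp only [Finset.mem_filter, Finset.mem_univ, true_and] at hi ⊢
  by_cases hci : A.mulVec xb i = 0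
  · have : A.mulVec (x k - ρ • xb) i = A.mulVec (x k) i - ρ * A.mulVec xb i := by
      simp [Matrix.mulVec_sub, Matrix.mulVec_smul]
    simpa [this, hci] using hi
  · simpa using hk0 k hk i hci
end

section
/- The function f(x) = ‖Ax − b‖₀, for A ∈ ℝ^{t×n} and b ∈ ℝ^t, is asymptotically level stable. -/
open Filter Topology

/-- Asymptotic function `f_∞(x) = liminf_{x'→x, t→+∞} f(t x')/t`. -/
noncomputable def asympFn {n : ℕ} (f : (Fin n → ℝ) → EReal) (x : Fin n → ℝ) : EReal :=
  Filter.liminf (fun p : (Fin n → ℝ) × ℝ => f (p.2 • p.1) / (p.2 : EReal)) ((𝓝 x) ×ˢ atTop)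

/-- Asymptotically level stable function. -/
def ALS {n : ℕ} (f : (Fin n → ℝ) → EReal) : Prop :=
  ∀ ρ : ℝ, 0 < ρ → ∀ t : ℕ → ℝ, (∃ M : ℝ, ∀ k, |t k| ≤ M) →
  ∀ (x : ℕ → Fin n → ℝ) (xb : Fin n → ℝ),
    (∀ k, f (x k) ≤ (t k : EReal)) →
    Tendsto (fun k => l2 (x k)) atTop atTop →
    Tendsto (fun k => (l2 (x k))⁻¹ • x k) atTop (𝓝 xb) →
    asympFn f xb = 0 →
    ∃ k0 : ℕ, ∀ k ≥ k0, f (x k - ρ • xb) ≤ (t k : EReal)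

/-- `f(x) = ‖Ax − b‖₀` is asymptotically level stable. -/
theorem l0_affine_ALS (t n : ℕ) (A : Matrix (Fin t) (Fin n) ℝ) (b : Fin t → ℝ) :
    ALS (fun x => ((l0 (A.mulVec x - b) : ℝ) : EReal)) := by
  intro ρ hρ ts _ x xb hle hl2 hdir _
  -- `A ∘ mulVec` is continuous, so `A (x k / ‖x k‖) → A xb`
  have hc : Continuous (fun v : Fin n → ℝ => A.mulVec v) := by
    exact Matrix.mulVecLin A |>.continuous_of_finiteDimensional
  have hA : Tendsto (fun k => A.mulVec ((l2 (x k))⁻¹ • x k)) atTop (𝓝 (A.mulVec xb)) :=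
    (hc.tendsto _).comp hdir
  have key : ∀ i : Fin t, A.mulVec xb i ≠ 0 →
      ∀ᶠ k in atTop, ρ * |A.mulVec xb i| < |A.mulVec (x k) i - b i| := by
    intro i hi
    have h1 : Tendsto (fun k => (l2 (x k))⁻¹ * A.mulVec (x k) i) atTop (𝓝 (A.mulVec xb i)) := by
      have := hA
      simp only [Matrix.mulVec_smul] at this
      exact (continuous_apply i).tendsto _ |>.comp this
    have h2 : Tendsto (fun k => |(l2 (x k))⁻¹ * A.mulVec (x k) i|) atTop (𝓝 |A.mulVec xb i|) :=
      h1.abs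
    have h3 : Tendsto (fun k => l2 (x k) * |(l2 (x k))⁻¹ * A.mulVec (x k) i|) atTop atTop :=
      hl2.atTop_mul_pos (abs_pos.2 hi) h2
    have h4 : Tendsto (fun k => |A.mulVec (x k) i|) atTop atTop := by
      refine h3.congr' ?_
      filter_upwards [hl2.eventually_gt_atTop 0] with k hk
      rw [abs_mul, abs_inv, abs_of_pos hk]
      field_simp
    have h5 : Tendsto (fun k => |A.mulVec (x k) i - b i|) atTop atTop := by
      refine tendsto_atTop_mono (fun k => ?_) (tendsto_atTop_add_const_right _ (-|b i|) h4)
      have := abs_sub_abs_le_abs_sub (A.mulVec (x k) i) (b i)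
      linarith
    exact h5.eventually_gt_atTop _
  have hall : ∀ᶠ k in atTop, ∀ i : Fin t, A.mulVec xb i ≠ 0 →
      ρ * |A.mulVec xb i| < |A.mulVec (x k) i - b i| := by
    rw [eventually_all]
    intro i
    by_cases hi : A.mulVec xb i = 0
    · exact Eventually.of_forall fun k h => absurd hi h
    · exact (key i hi).mono fun k h _ => h
  obtain ⟨k0, hk0⟩ := eventually_atTop.1 hall
  refine ⟨k0, fun k hk => ?_⟩
  have hcond := hk0 k hk
  have hcard : l0 (A.mulVec (x k - ρ • xb) - b) ≤ l0 (A.mulVec (x k) - b) := by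
    apply Finset.card_le_card
    intro i hi
    simp only [Finset.mem_filter, Finset.mem_univ, true_and] at hi ⊢
    have hexp : (A.mulVec (x k - ρ • xb) - b) i
        = (A.mulVec (x k) - b) i - ρ * A.mulVec xb i := by
      simp [Matrix.mulVec_sub, Matrix.mulVec_smul, smul_eq_mul]
      ring
    by_cases h0 : A.mulVec xb i = 0
    · rw [hexp, h0] at hi
      simpa using hi
    · have hlt := hcond i h0
      have hpos : 0 < ρ * |A.mulVec xb i| := mul_pos hρ (abs_pos.2 h0)
      have : (A.mulVec (x k) - b) i = A.mulVec (x k) i - b i := rfl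
      rw [this]
      intro heq
      rw [heq] at hlt
      simp at hlt
      linarith
  have hER : ((l0 (A.mulVec (x k - ρ • xb) - b) : ℝ) : EReal)
      ≤ ((l0 (A.mulVec (x k) - b) : ℝ) : EReal) := by
    exact_mod_cast hcard
  exact le_trans hER (hle k)
end

section
/- Let A ∈ ℝ^{t×n} and let g : ℝ^t → ℝ ∪ {+∞} be proper, lower semicontinuous and level bounded (g(y) → +∞ as ‖y‖₂ → +∞). Then f = g ∘ A is asymptotically level stable. In particular, for any sequence {x^k} with f(x^k) ≤ t^k for a bounded sequence {t^k}, ‖x^k‖₂ → +∞ and x^k/‖x^k‖₂ → x̄, one has x̄ ∈ ker(A). -/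
open Filter Topology

lemma norm_le_l2 {m : ℕ} (y : Fin m → ℝ) : ‖y‖ ≤ l2 y := by
  have h0 : 0 ≤ l2 y := Real.sqrt_nonneg _
  rw [pi_norm_le_iff_of_nonneg h0]
  intro i
  have h1 : (y i)^2 ≤ ∑ j, (y j)^2 :=
    Finset.single_le_sum (fun j _ => sq_nonneg (y j)) (Finset.mem_univ i)
  calc ‖y i‖ = Real.sqrt ((y i)^2) := by rw [Real.sqrt_sq_eq_abs]; rfl
    _ ≤ l2 y := Real.sqrt_le_sqrt h1

lemma key_kernel (t n : ℕ) (A : Matrix (Fin t) (Fin n) ℝ)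
    (g : (Fin t → ℝ) → EReal)
    (hlb : ∀ M : ℝ, ∃ R : ℝ, ∀ y : Fin t → ℝ, R ≤ l2 y → (M : EReal) ≤ g y)
    (tk : ℕ → ℝ) (hM : ∃ M : ℝ, ∀ k, |tk k| ≤ M)
    (x : ℕ → Fin n → ℝ) (xb : Fin n → ℝ)
    (hf : ∀ k, g (A.mulVec (x k)) ≤ (tk k : EReal))
    (hdiv : Tendsto (fun k => l2 (x k)) atTop atTop)
    (hlim : Tendsto (fun k => (l2 (x k))⁻¹ • x k) atTop (𝓝 xb)) :
    A.mulVec xb = 0 := by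
  obtain ⟨M, hMb⟩ := hM
  obtain ⟨R, hR⟩ := hlb (M + 1)
  have hbd : ∀ k, ‖A.mulVec (x k)‖ ≤ max R 0 := by
    intro k
    have hlt : l2 (A.mulVec (x k)) < R := by
      by_contra h
      push_neg at h
      have h1 := hR _ h
      have h2 : g (A.mulVec (x k)) ≤ ((M : ℝ) : EReal) := by
        refine le_trans (hf k) ?_
        exact_mod_cast (abs_le.1 (hMb k)).2
      have h3 : ((M + 1 : ℝ) : EReal) ≤ ((M : ℝ) : EReal) := le_trans h1 h2
      have := EReal.coe_le_coe_iff.1 h3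
      linarith
    exact le_trans (norm_le_l2 _) (le_trans hlt.le (le_max_left _ _))
  have hinv : Tendsto (fun k => (l2 (x k))⁻¹) atTop (𝓝 0) :=
    hdiv.inv_tendsto_atTop
  have hz : Tendsto (fun k => (l2 (x k))⁻¹ * max R 0) atTop (𝓝 0) := by
    have := hinv.mul_const (max R 0)
    simpa using this
  have hnn : ∀ k, 0 ≤ (l2 (x k))⁻¹ := fun k => inv_nonneg.2 (Real.sqrt_nonneg _)
  have htend0 : Tendsto (fun k => A.mulVec ((l2 (x k))⁻¹ • x k)) atTop (𝓝 0) := by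
    apply squeeze_zero_norm _ hz
    intro k
    rw [Matrix.mulVec_smul]
    rw [norm_smul]
    have : ‖(l2 (x k))⁻¹‖ = (l2 (x k))⁻¹ := abs_of_nonneg (hnn k)
    rw [this]
    exact mul_le_mul_of_nonneg_left (hbd k) (hnn k)
  have hcont : Continuous fun y : Fin n → ℝ => A.mulVec y := by
    have : (fun y : Fin n → ℝ => A.mulVec y) = A.mulVecLin := by
      ext y i; simp [Matrix.mulVecLin_apply]
    rw [this]
    exact A.mulVecLin.continuous_of_finiteDimensional
  have htend1 : Tendsto (fun k => A.mulVec ((l2 (x k))⁻¹ • x k)) atTop (𝓝 (A.mulVec xb)) :=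
    (hcont.tendsto xb).comp hlim
  exact (tendsto_nhds_unique htend1 htend0)

/-- If `g` is proper, lsc and level bounded then `f = g ∘ A` is asymptotically level
stable; in particular, any diverging sequence with bounded values `f(x^k) ≤ t^k` and
normalized limit `x̄` satisfies `A x̄ = 0`. -/
theorem comp_levelBounded_ALS (t n : ℕ) (A : Matrix (Fin t) (Fin n) ℝ)
    (g : (Fin t → ℝ) → EReal) (hproper : ∃ y, g y ≠ ⊤) (hnb : ∀ y, g y ≠ ⊥)
    (hlsc : LowerSemicontinuous g)
    (hlb : ∀ M : ℝ, ∃ R : ℝ, ∀ y : Fin t → ℝ, R ≤ l2 y → (M : EReal) ≤ g y) :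
    ALS (fun x => g (A.mulVec x)) ∧
    ∀ (tk : ℕ → ℝ), (∃ M : ℝ, ∀ k, |tk k| ≤ M) →
      ∀ (x : ℕ → Fin n → ℝ) (xb : Fin n → ℝ),
        (∀ k, g (A.mulVec (x k)) ≤ (tk k : EReal)) →
        Tendsto (fun k => l2 (x k)) atTop atTop →
        Tendsto (fun k => (l2 (x k))⁻¹ • x k) atTop (𝓝 xb) →
        A.mulVec xb = 0 := by
  have key := key_kernel t n A g hlb
  constructor
  · intro ρ hρ tk hM x xb hf hdiv hlim _
    have hker : A.mulVec xb = 0 := key tk hM x xb hf hdiv hlim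
    refine ⟨0, fun k _ => ?_⟩
    have : A.mulVec (x k - ρ • xb) = A.mulVec (x k) := by
      rw [Matrix.mulVec_sub, Matrix.mulVec_smul, hker]
      simp
    simpa [this] using hf k
  · intro tk hM x xb hf hdiv hlim
    exact key tk hM x xb hf hdiv hlim
end

section
/- Let g : ℝ^n → ℝ ∪ {+∞} be asymptotically level stable, A ∈ ℝ^{t×n}, b ∈ ℝ^t, λ > 0. Then f = g + λ‖A· − b‖₀ is asymptotically level stable. -/
open Filter Topology

private lemma ereal_add_coe_div (a : EReal) (c s : ℝ) (hs : 0 < s) :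
    (a + (c : EReal)) / (s : EReal) = a / (s : EReal) + ((c / s : ℝ) : EReal) := by
  induction a with
  | bot =>
      rw [EReal.bot_add, EReal.bot_div_of_pos_ne_top (by exact_mod_cast hs) (EReal.coe_ne_top s),
        EReal.bot_add]
  | coe a =>
      rw [← EReal.coe_add, ← EReal.coe_div, ← EReal.coe_div, ← EReal.coe_add, add_div]
  | top =>
      rw [EReal.top_add_of_ne_bot (EReal.coe_ne_bot c),
        EReal.top_div_of_pos_ne_top (by exact_mod_cast hs) (EReal.coe_ne_top s),
        EReal.top_add_of_ne_bot (EReal.coe_ne_bot _)]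

private lemma ereal_le_coe_sub {a : EReal} {c T : ℝ} (h : a + (c : EReal) ≤ (T : EReal)) :
    a ≤ ((T - c : ℝ) : EReal) := by
  rw [EReal.coe_sub, EReal.le_sub_iff_add_le (Or.inl (EReal.coe_ne_bot c))
    (Or.inl (EReal.coe_ne_top c))]
  exact h

/-- If `g` is asymptotically level stable, so is `g + λ‖A· − b‖₀`. -/
theorem ALS_add_l0 (t n : ℕ) (g : (Fin n → ℝ) → EReal) (hg : ALS g)
    (A : Matrix (Fin t) (Fin n) ℝ) (b : Fin t → ℝ) (lam : ℝ) (hlam : 0 < lam) :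
    ALS (fun x => g x + ((lam * (l0 (A.mulVec x - b) : ℝ) : ℝ) : EReal)) := by
  intro ρ hρ tk htb x xb hle hl2 hdir hasym
  obtain ⟨M, hM⟩ := htb
  set C : ℝ := lam * t with hC
  -- basic bounds on the penalty term
  have hl0t : ∀ y : Fin n → ℝ, (l0 (A.mulVec y - b) : ℝ) ≤ (t : ℝ) := by
    intro y
    have h1 : l0 (A.mulVec y - b) ≤ t := by
      refine le_trans (Finset.card_filter_le _ _) ?_
      simp
    exact_mod_cast h1
  have hl0C : ∀ y : Fin n → ℝ, lam * (l0 (A.mulVec y - b) : ℝ) ≤ C := fun y =>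
    mul_le_mul_of_nonneg_left (hl0t y) hlam.le
  have hl0nn : ∀ y : Fin n → ℝ, 0 ≤ lam * (l0 (A.mulVec y - b) : ℝ) := fun y => by positivity
  have hCnn : 0 ≤ C := le_trans (hl0nn 0) (hl0C 0)
  -- Step A : asympFn g xb = 0
  have hA1 : asympFn g xb ≤
      asympFn (fun x => g x + ((lam * (l0 (A.mulVec x - b) : ℝ) : ℝ) : EReal)) xb := by
    refine Filter.liminf_le_liminf ?_
    filter_upwards [(eventually_ge_atTop (0 : ℝ)).prod_inr (𝓝 xb)] with p hp
    refine EReal.div_le_div_right_of_nonneg (by exact_mod_cast hp) ?_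
    exact le_add_of_nonneg_right (by exact_mod_cast hl0nn (p.2 • p.1))
  have hA2 : (0 : EReal) ≤ asympFn g xb := by
    show (0 : EReal) ≤ liminf (fun p : (Fin n → ℝ) × ℝ => g (p.2 • p.1) / (p.2 : EReal))
      ((𝓝 xb) ×ˢ atTop)
    refine (le_liminf_iff ?_ ?_).2 fun y hy => ?_
    · isBoundedDefault
    · isBoundedDefault
    obtain ⟨r, hyr, hr0⟩ := EReal.exists_between_coe_real hy
    have hr0' : r < 0 := by exact_mod_cast hr0
    set ε : ℝ := -r / 2 with hε
    have hεpos : 0 < ε := by simp [hε]; linarith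
    set r' : ℝ := r / 2 with hr'
    have hr'neg : r' < 0 := by simp [hr']; linarith
    have hlim0 : liminf (fun p : (Fin n → ℝ) × ℝ =>
        (g (p.2 • p.1) + ((lam * (l0 (A.mulVec (p.2 • p.1) - b) : ℝ) : ℝ) : EReal))
          / (p.2 : EReal)) ((𝓝 xb) ×ˢ atTop) = 0 := hasym
    have hev1 : ∀ᶠ p : (Fin n → ℝ) × ℝ in (𝓝 xb) ×ˢ atTop,
        (r' : EReal) < (g (p.2 • p.1) +
          ((lam * (l0 (A.mulVec (p.2 • p.1) - b) : ℝ) : ℝ) : EReal)) / (p.2 : EReal) := by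
      have hr'' : (r' : EReal) < 0 := by exact_mod_cast hr'neg
      exact eventually_lt_of_lt_liminf (hlim0.symm ▸ hr'')
    have hev2 : ∀ᶠ p in ((𝓝 xb) ×ˢ (atTop : Filter ℝ)),
        (fun x => g x + ((lam * (l0 (A.mulVec x - b) : ℝ) : ℝ) : EReal)) (p.2 • p.1)
          / (p.2 : EReal)
        ≤ g (p.2 • p.1) / (p.2 : EReal) + (ε : EReal) := by
      filter_upwards [(eventually_ge_atTop (max 1 (C / ε))).prod_inr (𝓝 xb)] with p hp
      have hs1 : (1 : ℝ) ≤ p.2 := le_trans (le_max_left _ _) hp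
      have hspos : 0 < p.2 := lt_of_lt_of_le one_pos hs1
      have hcs : lam * (l0 (A.mulVec (p.2 • p.1) - b) : ℝ) / p.2 ≤ ε := by
        rw [div_le_iff₀ hspos]
        calc lam * (l0 (A.mulVec (p.2 • p.1) - b) : ℝ) ≤ C := hl0C _
          _ ≤ ε * p.2 := by
              have h2 : C / ε ≤ p.2 := le_trans (le_max_right _ _) hp
              calc C = ε * (C / ε) := by field_simp
                _ ≤ ε * p.2 := mul_le_mul_of_nonneg_left h2 hεpos.le
      show (g (p.2 • p.1) + ((lam * (l0 (A.mulVec (p.2 • p.1) - b) : ℝ) : ℝ) : EReal))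
          / (p.2 : EReal) ≤ g (p.2 • p.1) / (p.2 : EReal) + (ε : EReal)
      rw [ereal_add_coe_div _ _ _ hspos]
      exact add_le_add_right (by exact_mod_cast hcs) _
    filter_upwards [hev1, hev2] with p h1 h2
    have h3 : (r' : EReal) < g (p.2 • p.1) / (p.2 : EReal) + (ε : EReal) := lt_of_lt_of_le h1 h2
    have h4 : (r' : EReal) - (ε : EReal) < g (p.2 • p.1) / (p.2 : EReal) :=
      EReal.sub_lt_of_lt_add h3
    have h5 : ((r' - ε : ℝ) : EReal) = (r : EReal) := by
      norm_cast; rw [hr', hε]; ring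
    rw [← EReal.coe_sub, h5] at h4
    exact lt_trans hyr h4
  have hg0 : asympFn g xb = 0 := le_antisymm (hA1.trans_eq hasym) hA2
  -- Step B : apply ALS of g with shifted levels
  set s : ℕ → ℝ := fun k => tk k - lam * (l0 (A.mulVec (x k) - b) : ℝ) with hs
  have hsb : ∀ k, |s k| ≤ M + C := by
    intro k
    have h1 := hl0C (x k)
    have h2 := hl0nn (x k)
    have h3 := hM k
    rw [abs_le] at h3 ⊢
    constructor <;> simp only [hs] <;> nlinarith [h3.1, h3.2]
  have hgs : ∀ k, g (x k) ≤ ((s k : ℝ) : EReal) := by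
    intro k
    exact ereal_le_coe_sub (hle k)
  obtain ⟨k0, hk0⟩ := hg ρ hρ s ⟨M + C, hsb⟩ x xb hgs hl2 hdir hg0
  -- Step C : eventually the support of A(xₖ - ρ x̄) - b is inside that of A xₖ - b
  have hAcont : Continuous fun v : Fin n → ℝ => A.mulVec v := by
    have := A.mulVecLin.continuous_of_finiteDimensional (𝕜 := ℝ)
    simpa [Matrix.coe_mulVecLin] using this
  have hAu : Tendsto (fun k => A.mulVec ((l2 (x k))⁻¹ • x k)) atTop (𝓝 (A.mulVec xb)) :=
    (hAcont.tendsto _).comp hdir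
  have hxrep : ∀ᶠ k in atTop, ∀ i, A.mulVec xb i ≠ 0 → A.mulVec (x k) i - b i ≠ 0 := by
    rw [eventually_all]
    intro i
    by_cases hi : A.mulVec xb i = 0
    · exact Eventually.of_forall fun k h => absurd hi h
    · have hwi : Tendsto (fun k => A.mulVec ((l2 (x k))⁻¹ • x k) i) atTop
          (𝓝 (A.mulVec xb i)) := (tendsto_pi_nhds.1 hAu) i
      have habs : Tendsto (fun k => |A.mulVec ((l2 (x k))⁻¹ • x k) i|) atTop
          (𝓝 |A.mulVec xb i|) := hwi.abs
      have hprod : Tendsto (fun k => |A.mulVec ((l2 (x k))⁻¹ • x k) i| * l2 (x k))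
          atTop atTop := Filter.Tendsto.pos_mul_atTop (abs_pos.2 hi) habs hl2
      filter_upwards [hprod.eventually_gt_atTop (|b i|), hl2.eventually_gt_atTop 0]
        with k h1 h2 _
      have hx : A.mulVec (x k) i = l2 (x k) * A.mulVec ((l2 (x k))⁻¹ • x k) i := by
        have hrepr : x k = l2 (x k) • ((l2 (x k))⁻¹ • x k) := by
          rw [smul_smul, mul_inv_cancel₀ h2.ne', one_smul]
        conv_lhs => rw [hrepr]
        rw [Matrix.mulVec_smul]
        simp [smul_eq_mul]
      have hgt : |b i| < |A.mulVec (x k) i| := by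
        rw [hx, abs_mul, abs_of_pos h2, mul_comm]
        exact h1
      intro hcontra
      rw [sub_eq_zero] at hcontra
      rw [hcontra] at hgt
      exact lt_irrefl _ hgt
  obtain ⟨k1, hk1⟩ := eventually_atTop.1 hxrep
  -- conclusion
  refine ⟨max k0 k1, fun k hk => ?_⟩
  have hsup : l0 (A.mulVec (x k - ρ • xb) - b) ≤ l0 (A.mulVec (x k) - b) := by
    apply Finset.card_le_card
    intro i hi
    simp only [Finset.mem_filter, Finset.mem_univ, true_and] at hi ⊢
    rw [Matrix.mulVec_sub, Matrix.mulVec_smul] at hi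
    by_cases h0 : A.mulVec xb i = 0
    · have heq : (A.mulVec (x k) - ρ • A.mulVec xb - b) i = (A.mulVec (x k) - b) i := by
        simp [h0]
      rwa [heq] at hi
    · have := hk1 k (le_trans (le_max_right _ _) hk) i h0
      simpa using this
  have h1 : g (x k - ρ • xb) ≤ ((s k : ℝ) : EReal) := hk0 k (le_trans (le_max_left _ _) hk)
  have h2 : ((lam * (l0 (A.mulVec (x k - ρ • xb) - b) : ℝ) : ℝ) : EReal)
      ≤ ((lam * (l0 (A.mulVec (x k) - b) : ℝ) : ℝ) : EReal) := by
    exact_mod_cast mul_le_mul_of_nonneg_left (Nat.cast_le.2 hsup) hlam.le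
  calc (fun x => g x + ((lam * (l0 (A.mulVec x - b) : ℝ) : ℝ) : EReal)) (x k - ρ • xb)
      = g (x k - ρ • xb) + ((lam * (l0 (A.mulVec (x k - ρ • xb) - b) : ℝ) : ℝ) : EReal) := rfl
    _ ≤ ((s k : ℝ) : EReal) + ((lam * (l0 (A.mulVec (x k) - b) : ℝ) : ℝ) : EReal) :=
        add_le_add h1 h2
    _ = (((s k + lam * (l0 (A.mulVec (x k) - b) : ℝ) : ℝ)) : EReal) := (EReal.coe_add _ _).symm
    _ = ((tk k : ℝ) : EReal) := by norm_cast; simp [hs]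
end

section
/- Let B ∈ ℝ^{m×n} be nonzero, p > 0, C ⊂ ℝ^n nonempty compact, k* = min{‖Bx‖₀ : x ∈ C} with k* ≥ 1, τ = inf_{x∈C} (k*-th largest of {|(Bx)_i|}), and γ* = 1/τ^p. Then for every γ > γ*, the problems min{‖Bx‖₀ : x ∈ C} and min{ψ_γ(Bx) : x ∈ C} have the same optimal value k* and the same set of optimal solutions. -/
open Filter Topology

/-- The `k`-th largest value (1-indexed) among the entries of `v`. -/
noncomputable def kthLargest {m : ℕ} (v : Fin m → ℝ) (k : ℕ) : ℝ :=
  sSup {r : ℝ | k ≤ (Finset.univ.filter fun i => r ≤ v i).card}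

/-- Auxiliary: inf of `v` over a finset, `0` if empty. -/
noncomputable def finfAux {m : ℕ} (v : Fin m → ℝ) (S : Finset (Fin m)) : ℝ :=
  if h : S.Nonempty then S.inf' h v else 0

lemma powP_nonempty {m k : ℕ} (hkm : k ≤ m) :
    (Finset.univ.powersetCard k : Finset (Finset (Fin m))).Nonempty :=
  Finset.powersetCard_nonempty.2 (by simpa using hkm)

lemma kthLargest_isGreatest {m k : ℕ} (v : Fin m → ℝ) (hk1 : 1 ≤ k) (hkm : k ≤ m) :
    IsGreatest {r : ℝ | k ≤ (Finset.univ.filter fun i => r ≤ v i).card}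
      ((Finset.univ.powersetCard k).sup' (powP_nonempty hkm) (finfAux v)) := by
  constructor
  · obtain ⟨T, hTmem, hTeq⟩ :=
      Finset.exists_mem_eq_sup' (powP_nonempty (m := m) hkm) (finfAux v)
    have hTcard : T.card = k := (Finset.mem_powersetCard_univ).1 hTmem
    have hTne : T.Nonempty := Finset.card_pos.1 (by omega)
    have hfin : finfAux v T = T.inf' hTne v := by simp [finfAux, hTne]
    rw [Set.mem_setOf_eq, hTeq, hfin]
    calc k = T.card := hTcard.symm
    _ ≤ (Finset.univ.filter fun i => T.inf' hTne v ≤ v i).card := by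
        apply Finset.card_le_card
        intro i hi
        simp only [Finset.mem_filter, Finset.mem_univ, true_and]
        exact Finset.inf'_le v hi
  · intro r hr
    rw [Set.mem_setOf_eq] at hr
    obtain ⟨T, hTsub, hTcard⟩ :=
      Finset.exists_subset_card_eq (s := Finset.univ.filter fun i => r ≤ v i) hr
    have hTne : T.Nonempty := Finset.card_pos.1 (by omega)
    have hTmem : T ∈ (Finset.univ.powersetCard k : Finset (Finset (Fin m))) :=
      (Finset.mem_powersetCard_univ).2 hTcard
    have h1 : r ≤ finfAux v T := by
      simp only [finfAux, hTne, dif_pos]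
      apply Finset.le_inf'
      intro i hi
      have := hTsub hi
      simp only [Finset.mem_filter] at this
      exact this.2
    exact h1.trans (Finset.le_sup' (finfAux v) hTmem)

lemma kthLargest_eq_sup' {m k : ℕ} (v : Fin m → ℝ) (hk1 : 1 ≤ k) (hkm : k ≤ m) :
    kthLargest v k
      = (Finset.univ.powersetCard k).sup' (powP_nonempty hkm) (finfAux v) :=
  (kthLargest_isGreatest v hk1 hkm).csSup_eq

lemma kthLargest_card {m k : ℕ} (v : Fin m → ℝ) (hk1 : 1 ≤ k) (hkm : k ≤ m) :
    k ≤ (Finset.univ.filter fun i => kthLargest v k ≤ v i).card := by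
  have h := (kthLargest_isGreatest v hk1 hkm).1
  rw [kthLargest_eq_sup' v hk1 hkm]
  exact h

lemma kthLargest_pos {m k : ℕ} (v : Fin m → ℝ) (hk1 : 1 ≤ k) (hkm : k ≤ m)
    (hpos : k ≤ (Finset.univ.filter fun i => 0 < v i).card) :
    0 < kthLargest v k := by
  obtain ⟨T, hTsub, hTcard⟩ :=
    Finset.exists_subset_card_eq (s := Finset.univ.filter fun i => 0 < v i) hpos
  have hTne : T.Nonempty := Finset.card_pos.1 (by omega)
  have hTmem : T ∈ (Finset.univ.powersetCard k : Finset (Finset (Fin m))) :=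
    (Finset.mem_powersetCard_univ).2 hTcard
  have h1 : 0 < finfAux v T := by
    simp only [finfAux, hTne, dif_pos]
    rw [Finset.lt_inf'_iff]
    intro i hi
    have := hTsub hi
    simp only [Finset.mem_filter] at this
    exact this.2
  rw [kthLargest_eq_sup' v hk1 hkm]
  exact h1.trans_le (Finset.le_sup' (finfAux v) hTmem)

lemma kthLargest_cont {n m k : ℕ} (B : Matrix (Fin m) (Fin n) ℝ) (hk1 : 1 ≤ k) (hkm : k ≤ m) :
    Continuous fun x : Fin n → ℝ => kthLargest (fun i => |B.mulVec x i|) k := by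
  have heq : (fun x : Fin n → ℝ => kthLargest (fun i => |B.mulVec x i|) k)
      = fun x => (Finset.univ.powersetCard k).sup' (powP_nonempty hkm)
          (fun S => finfAux (fun i => |B.mulVec x i|) S) := by
    funext x
    exact kthLargest_eq_sup' _ hk1 hkm
  rw [heq]
  apply Continuous.finset_sup'_apply (powP_nonempty hkm)
  intro S hS
  by_cases h : S.Nonempty
  · simp only [finfAux, h, dif_pos]
    apply Continuous.finset_inf'_apply h
    intro i hi
    have : Continuous fun x : Fin n → ℝ => B.mulVec x i := by
      have : (fun x : Fin n → ℝ => B.mulVec x i) = fun x => ∑ j, B i j * x j := by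
        funext x; simp [Matrix.mulVec, dotProduct]
      rw [this]
      exact continuous_finset_sum _ fun j _ => (continuous_const.mul (continuous_apply j))
    exact this.abs
  · simp only [finfAux, h, dif_neg, not_false_iff]
    exact continuous_const

/-- For `γ > γ* = 1/τ^p`, the problems `min{‖Bx‖₀ : x ∈ C}` and `min{ψ_γ(Bx) : x ∈ C}`
have the same optimal value `k*` and the same optimal solution set. -/
theorem exact_approx_compact (n m : ℕ) (B : Matrix (Fin m) (Fin n) ℝ) (hB : B ≠ 0)
    (p : ℝ) (hp : 0 < p) (C : Set (Fin n → ℝ)) (hC : IsCompact C) (hne : C.Nonempty)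
    (kstar : ℕ) (hk1 : 1 ≤ kstar)
    (hmin : IsLeast {k : ℕ | ∃ x ∈ C, l0 (B.mulVec x) = k} kstar)
    (τ : ℝ)
    (hτ : τ = sInf {r : ℝ | ∃ x ∈ C, r = kthLargest (fun i => |B.mulVec x i|) kstar}) :
    ∀ γ : ℝ, 1 / τ ^ p < γ →
      IsLeast {r : ℝ | ∃ x ∈ C, r = ∑ i, min (γ * |B.mulVec x i| ^ p) 1} (kstar : ℝ) ∧
      {x ∈ C | l0 (B.mulVec x) = kstar}
        = {x ∈ C | ∑ i, min (γ * |B.mulVec x i| ^ p) 1 = (kstar : ℝ)} := by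
  intro γ hγ
  obtain ⟨x₀, hx₀C, hx₀⟩ := hmin.1
  have hkm : kstar ≤ m := by
    rw [← hx₀]
    calc l0 (B.mulVec x₀) ≤ (Finset.univ : Finset (Fin m)).card := Finset.card_filter_le _ _
    _ = m := by simp
  set g : (Fin n → ℝ) → ℝ := fun x => kthLargest (fun i => |B.mulVec x i|) kstar with hg
  have hgcont : Continuous g := kthLargest_cont B hk1 hkm
  -- every x in C has at least kstar nonzero entries
  have hl0 : ∀ x ∈ C, kstar ≤ l0 (B.mulVec x) := fun x hx => hmin.2 ⟨x, hx, rfl⟩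
  have hgpos : ∀ x ∈ C, 0 < g x := by
    intro x hx
    apply kthLargest_pos _ hk1 hkm
    have : (Finset.univ.filter fun i => 0 < |B.mulVec x i|)
        = (Finset.univ.filter fun i => B.mulVec x i ≠ 0) := by
      apply Finset.filter_congr
      intro i _
      simp [abs_pos]
    rw [this]
    exact hl0 x hx
  -- the set defining τ is the image of C under g
  have hset : {r : ℝ | ∃ x ∈ C, r = kthLargest (fun i => |B.mulVec x i|) kstar} = g '' C := by
    ext r
    simp [Set.mem_image, eq_comm, hg]
  have himg : IsCompact (g '' C) := hC.image hgcont
  have hτmem : τ ∈ g '' C := by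
    rw [hτ, hset]
    exact himg.sInf_mem (hne.image g)
  obtain ⟨x₁, hx₁C, hx₁⟩ := hτmem
  have hτpos : 0 < τ := hx₁ ▸ hgpos x₁ hx₁C
  have hτle : ∀ x ∈ C, τ ≤ g x := by
    intro x hx
    rw [hτ, hset]
    exact csInf_le himg.bddBelow ⟨x, hx, rfl⟩
  have hτppos : 0 < τ ^ p := Real.rpow_pos_of_pos hτpos p
  have hγτ : 1 < γ * τ ^ p := by
    rw [div_lt_iff₀ hτppos] at hγ
    linarith
  have hγpos : 0 < γ := by
    rcases lt_or_ge 0 γ with h | h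
    · exact h
    · exfalso; nlinarith
  -- terms are nonneg
  have hterm_nonneg : ∀ (x : Fin n → ℝ) (i : Fin m),
      0 ≤ min (γ * |B.mulVec x i| ^ p) 1 := by
    intro x i
    apply le_min _ zero_le_one
    positivity
  -- key: entries at least τ contribute exactly 1
  have hterm_one : ∀ x ∈ C, ∀ i : Fin m, g x ≤ |B.mulVec x i| →
      min (γ * |B.mulVec x i| ^ p) 1 = 1 := by
    intro x hx i hi
    apply min_eq_right
    have hτi : τ ≤ |B.mulVec x i| := (hτle x hx).trans hi
    have h2 : τ ^ p ≤ |B.mulVec x i| ^ p := Real.rpow_le_rpow hτpos.le hτi hp.le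
    nlinarith
  -- psi is at least kstar on C
  have hpsi_ge : ∀ x ∈ C, (kstar : ℝ) ≤ ∑ i, min (γ * |B.mulVec x i| ^ p) 1 := by
    intro x hx
    set W := Finset.univ.filter fun i => g x ≤ |B.mulVec x i| with hW
    have hWcard : kstar ≤ W.card := kthLargest_card _ hk1 hkm
    calc (kstar : ℝ) ≤ (W.card : ℝ) := by exact_mod_cast hWcard
    _ = ∑ _i ∈ W, (1:ℝ) := by simp
    _ = ∑ i ∈ W, min (γ * |B.mulVec x i| ^ p) 1 := by
        refine (Finset.sum_congr rfl ?_).symm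
        intro i hi
        apply hterm_one x hx
        have := hi
        rw [hW, Finset.mem_filter] at this
        exact this.2
    _ ≤ ∑ i, min (γ * |B.mulVec x i| ^ p) 1 := by
        apply Finset.sum_le_sum_of_subset_of_nonneg (Finset.subset_univ W)
        intro i _ _
        exact hterm_nonneg x i
  -- psi is at most l0
  have hpsi_le : ∀ x : Fin n → ℝ,
      ∑ i, min (γ * |B.mulVec x i| ^ p) 1 ≤ (l0 (B.mulVec x) : ℝ) := by
    intro x
    have hl0eq : (l0 (B.mulVec x) : ℝ)
        = ∑ i : Fin m, (if B.mulVec x i ≠ 0 then (1:ℝ) else 0) := by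
      rw [l0]
      exact (Finset.sum_boole _ _).symm
    rw [hl0eq]
    apply Finset.sum_le_sum
    intro i _
    by_cases h : B.mulVec x i = 0
    · simp [h, Real.zero_rpow hp.ne']
    · rw [if_pos h]
      exact min_le_right _ _
  -- if psi = kstar then l0 = kstar
  have hC3 : ∀ x ∈ C, (∑ i, min (γ * |B.mulVec x i| ^ p) 1 = (kstar:ℝ)) →
      l0 (B.mulVec x) = kstar := by
    intro x hx hpsi
    by_contra hne'
    have hlt : kstar < l0 (B.mulVec x) := lt_of_le_of_ne (hl0 x hx) (Ne.symm hne')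
    set N := Finset.univ.filter fun i => B.mulVec x i ≠ 0 with hN
    set W := Finset.univ.filter fun i => g x ≤ |B.mulVec x i| with hW
    have hWcard : kstar ≤ W.card := kthLargest_card _ hk1 hkm
    obtain ⟨T, hTsub, hTcard⟩ := Finset.exists_subset_card_eq (s := W) hWcard
    have hTN : T ⊆ N := by
      intro i hi
      have hiW := hTsub hi
      rw [hW, Finset.mem_filter] at hiW
      rw [hN, Finset.mem_filter]
      refine ⟨Finset.mem_univ _, ?_⟩
      intro h0
      have h1 := (hτle x hx).trans hiW.2
      rw [h0] at h1
      simp at h1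
      linarith
    have hex : ∃ j ∈ N, j ∉ T := by
      by_contra hcon
      push_neg at hcon
      have hsub : N ⊆ T := hcon
      have hcc := Finset.card_le_card hsub
      rw [hTcard] at hcc
      have hNl0 : N.card = l0 (B.mulVec x) := rfl
      omega
    obtain ⟨j, hjN, hjT⟩ := hex
    have hsum : ∑ i ∈ insert j T, min (γ * |B.mulVec x i| ^ p) 1
        ≤ ∑ i, min (γ * |B.mulVec x i| ^ p) 1 :=
      Finset.sum_le_sum_of_subset_of_nonneg (Finset.subset_univ _)
        (fun i _ _ => hterm_nonneg x i)
    rw [Finset.sum_insert hjT] at hsum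
    have hT1 : ∑ i ∈ T, min (γ * |B.mulVec x i| ^ p) 1 = (kstar:ℝ) := by
      have hone : ∀ i ∈ T, min (γ * |B.mulVec x i| ^ p) 1 = 1 := by
        intro i hi
        apply hterm_one x hx
        have := hTsub hi
        rw [hW, Finset.mem_filter] at this
        exact this.2
      rw [Finset.sum_congr rfl hone]
      simp [hTcard]
    have hjpos : 0 < min (γ * |B.mulVec x j| ^ p) 1 := by
      rw [hN, Finset.mem_filter] at hjN
      have habs : 0 < |B.mulVec x j| := abs_pos.2 hjN.2
      have hrp := Real.rpow_pos_of_pos habs p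
      apply lt_min _ one_pos
      positivity
    rw [hpsi, hT1] at hsum
    linarith
  refine ⟨⟨⟨x₀, hx₀C, ?_⟩, ?_⟩, ?_⟩
  · have h1 := hpsi_ge x₀ hx₀C
    have h2 := hpsi_le x₀
    rw [hx₀] at h2
    exact le_antisymm h1 h2
  · rintro r ⟨x, hx, rfl⟩
    exact hpsi_ge x hx
  · ext x
    simp only [Set.mem_setOf_eq, Set.mem_sep_iff]
    constructor
    · rintro ⟨hxC, hxl0⟩
      refine ⟨hxC, ?_⟩
      have h2 := hpsi_le x
      rw [hxl0] at h2
      exact le_antisymm h2 (hpsi_ge x hxC)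
    · rintro ⟨hxC, hxpsi⟩
      exact ⟨hxC, hC3 x hxC hxpsi⟩
end

section
/- Let Φ(x) = φ(x) + λ‖Bx‖₀ with φ proper, lsc, asymptotically level stable and bounded below. The marginal function F(λ) = min_x Φ(x), defined for λ > 0, is a pointwise minimum of finitely many affine functions λ ↦ ρ_i + λ s_i with 0 ≤ s_L < … < s_0 ≤ m and ρ_0 < … < ρ_L; consequently F is continuous, piecewise linear, nondecreasing and concave on (0, +∞). -/
open Filter Topology

/-- The marginal function `F(λ) = inf_x (φ(x) + λ‖Bx‖₀)` is, on `(0,∞)`, a pointwise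
minimum of finitely many affine functions `λ ↦ ρ_i + λ s_i` with
`0 ≤ s_L < ⋯ < s_0 ≤ m` and `ρ_0 < ⋯ < ρ_L`; consequently it is continuous, piecewise
linear, nondecreasing and concave on `(0,∞)`. -/
theorem marginal_function_piecewise_linear (n m : ℕ) (φ : (Fin n → ℝ) → EReal)
    (hproper : ∃ x, φ x ≠ ⊤) (hnb : ∀ x, φ x ≠ ⊥)
    (hlsc : LowerSemicontinuous φ) (hals : ALS φ)
    (hbdd : ∃ c : ℝ, ∀ x, (c : EReal) ≤ φ x)
    (B : Matrix (Fin m) (Fin n) ℝ) :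
    ∃ (L : ℕ) (s ρ : Fin (L + 1) → ℝ),
      StrictAnti s ∧ StrictMono ρ ∧ 0 ≤ s (Fin.last L) ∧ s 0 ≤ m ∧
      (∀ lam : ℝ, 0 < lam →
        (⨅ x : Fin n → ℝ, φ x + ((lam * (l0 (B.mulVec x) : ℝ) : ℝ) : EReal))
          = ((Finset.univ.inf' Finset.univ_nonempty
              (fun i : Fin (L + 1) => ρ i + lam * s i) : ℝ) : EReal)) ∧
      ContinuousOn (fun lam : ℝ => Finset.univ.inf' Finset.univ_nonempty
          (fun i : Fin (L + 1) => ρ i + lam * s i)) (Set.Ioi 0) ∧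
      MonotoneOn (fun lam : ℝ => Finset.univ.inf' Finset.univ_nonempty
          (fun i : Fin (L + 1) => ρ i + lam * s i)) (Set.Ioi 0) ∧
      ConcaveOn ℝ (Set.Ioi 0) (fun lam : ℝ => Finset.univ.inf' Finset.univ_nonempty
          (fun i : Fin (L + 1) => ρ i + lam * s i)) := by
  classical
  obtain ⟨c, hc⟩ := hbdd
  obtain ⟨x0, hx0⟩ := hproper
  -- the value function of the cardinality-constrained problems
  set R : ℕ → EReal := fun k => ⨅ x : {x : Fin n → ℝ // l0 (B.mulVec x) ≤ k}, φ x.1 with hRdef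
  have hl0m : ∀ x : Fin n → ℝ, l0 (B.mulVec x) ≤ m := fun x =>
    le_trans (Finset.card_filter_le _ _) (by simp)
  have hRanti : ∀ {j k : ℕ}, j ≤ k → R k ≤ R j := by
    intro j k hjk
    exact le_iInf fun x => iInf_le_of_le ⟨x.1, le_trans x.2 hjk⟩ le_rfl
  have hRc : ∀ k, (c : EReal) ≤ R k := fun k => le_iInf fun x => hc _
  have hRbot : ∀ k, R k ≠ ⊥ := by
    intro k h
    have := hRc k
    rw [h, le_bot_iff] at this
    exact EReal.coe_ne_bot c this
  have hRle : ∀ x : Fin n → ℝ, R (l0 (B.mulVec x)) ≤ φ x := fun x =>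
    iInf_le _ (⟨x, le_rfl⟩ : {y : Fin n → ℝ // l0 (B.mulVec y) ≤ l0 (B.mulVec x)})
  have hRm : R m ≠ ⊤ := by
    intro h
    have h2 : R m ≤ φ x0 := le_trans (hRanti (hl0m x0)) (hRle x0)
    rw [h] at h2
    exact hx0 (top_le_iff.1 h2)
  -- the selected indices
  set K : Finset ℕ :=
    (Finset.range (m + 1)).filter (fun k => R k ≠ ⊤ ∧ (k = 0 ∨ R k < R (k - 1))) with hKdef
  have hmemK : ∀ k ∈ K, k ≤ m ∧ R k ≠ ⊤ ∧ (k = 0 ∨ R k < R (k - 1)) := by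
    intro k hk
    rw [hKdef, Finset.mem_filter, Finset.mem_range] at hk
    exact ⟨by omega, hk.2⟩
  have hex : ∃ k, R k ≠ ⊤ := ⟨m, hRm⟩
  have hk0K : Nat.find hex ∈ K := by
    have hk0top : R (Nat.find hex) ≠ ⊤ := Nat.find_spec hex
    have hk0m : Nat.find hex ≤ m := Nat.find_min' hex hRm
    rw [hKdef, Finset.mem_filter, Finset.mem_range]
    refine ⟨by omega, hk0top, ?_⟩
    rcases Nat.eq_zero_or_pos (Nat.find hex) with h | h
    · exact Or.inl h
    · right
      have htop : R (Nat.find hex - 1) = ⊤ := by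
        by_contra hne
        exact Nat.find_min hex (by omega) hne
      rw [htop]
      exact lt_top_iff_ne_top.2 hk0top
  have hKne : K.Nonempty := ⟨_, hk0K⟩
  have hKlt : ∀ j ∈ K, ∀ k ∈ K, j < k → R k < R j := by
    intro j hj k hk hjk
    obtain ⟨-, -, hk2⟩ := hmemK k hk
    rcases hk2 with h0 | hlt
    · omega
    · exact lt_of_lt_of_le hlt (hRanti (by omega : j ≤ k - 1))
  -- every feasible level is dominated by a selected one
  have key1 : ∀ k, k ≤ m → R k ≠ ⊤ → ∃ j ∈ K, j ≤ k ∧ R j ≤ R k := by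
    intro k
    induction k using Nat.strong_induction_on with
    | _ k ih =>
      intro hkm hktop
      by_cases hkK : k ∈ K
      · exact ⟨k, hkK, le_rfl, le_rfl⟩
      · have hnot : ¬(R k ≠ ⊤ ∧ (k = 0 ∨ R k < R (k - 1))) := by
          intro h
          exact hkK (by rw [hKdef, Finset.mem_filter, Finset.mem_range]; exact ⟨by omega, h⟩)
        push_neg at hnot
        have h2 := hnot hktop
        obtain ⟨hk0, hle'⟩ := h2
        have htop' : R (k - 1) ≠ ⊤ := fun h => hktop (top_le_iff.1 (h ▸ hle'))
        obtain ⟨j, hjK, hjk, hjle⟩ := ih (k - 1) (by omega) (by omega) htop'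
        exact ⟨j, hjK, by omega, le_trans hjle hle'⟩
  -- enumerate K in decreasing order
  set L : ℕ := K.card - 1 with hLdef
  have hcard : K.card = L + 1 := by
    have := Finset.card_pos.2 hKne
    omega
  set e := K.orderIsoOfFin hcard with hedef
  set sN : Fin (L + 1) → ℕ := fun i => (e i.rev : ℕ) with hsNdef
  have hsNK : ∀ i, sN i ∈ K := fun i => (e i.rev).2
  have hsNanti : ∀ {i j : Fin (L + 1)}, i < j → sN j < sN i := by
    intro i j hij
    have : e j.rev < e i.rev := e.strictMono (Fin.rev_lt_rev.2 hij)
    exact_mod_cast this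
  have hRtop : ∀ i, R (sN i) ≠ ⊤ := fun i => (hmemK _ (hsNK i)).2.1
  set ρ : Fin (L + 1) → ℝ := fun i => (R (sN i)).toReal with hρdef
  have hρR : ∀ i, ((ρ i : ℝ) : EReal) = R (sN i) := fun i =>
    EReal.coe_toReal (hRtop i) (hRbot _)
  refine ⟨L, fun i => (sN i : ℝ), ρ, ?_, ?_, ?_, ?_, ?_, ?_, ?_, ?_⟩
  · -- StrictAnti s
    intro i j hij
    show (sN j : ℝ) < (sN i : ℝ)
    exact_mod_cast hsNanti hij
  · -- StrictMono ρ
    intro i j hij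
    have h1 : R (sN i) < R (sN j) := hKlt _ (hsNK j) _ (hsNK i) (hsNanti hij)
    have := hρR i; have := hρR j
    have : ((ρ i : ℝ) : EReal) < ((ρ j : ℝ) : EReal) := by rw [hρR i, hρR j]; exact h1
    exact_mod_cast this
  · -- 0 ≤ s last
    positivity
  · -- s 0 ≤ m
    have h := (hmemK _ (hsNK 0)).1
    show (sN 0 : ℝ) ≤ (m : ℝ)
    exact_mod_cast h
  · -- the key identity
    intro lam hlam
    obtain ⟨imin, -, himin⟩ := Finset.exists_mem_eq_inf' Finset.univ_nonempty
      (fun i : Fin (L + 1) => ρ i + lam * (sN i : ℝ))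
    apply le_antisymm
    · -- iInf ≤ min  : it suffices to bound by the term at imin
      rw [himin]
      have hεbound : ∀ ε : ℝ, 0 < ε →
          (⨅ x : Fin n → ℝ, φ x + ((lam * (l0 (B.mulVec x) : ℝ) : ℝ) : EReal))
            ≤ ((ρ imin + lam * (sN imin : ℝ) + ε : ℝ) : EReal) := by
        intro ε hε
        have hlt : R (sN imin) < ((ρ imin + ε : ℝ) : EReal) := by
          rw [← hρR imin]
          exact_mod_cast lt_add_of_pos_right _ hε
        obtain ⟨x, hx⟩ := iInf_lt_iff.1 hlt
        refine le_trans (iInf_le _ x.1) ?_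
        have h1 : φ x.1 ≤ ((ρ imin + ε : ℝ) : EReal) := le_of_lt hx
        have h2 : ((lam * (l0 (B.mulVec x.1) : ℝ) : ℝ) : EReal)
            ≤ ((lam * (sN imin : ℝ) : ℝ) : EReal) := by
          apply EReal.coe_le_coe_iff.2
          have : (l0 (B.mulVec x.1) : ℝ) ≤ (sN imin : ℝ) := by exact_mod_cast x.2
          nlinarith
        calc φ x.1 + ((lam * (l0 (B.mulVec x.1) : ℝ) : ℝ) : EReal)
            ≤ ((ρ imin + ε : ℝ) : EReal) + ((lam * (sN imin : ℝ) : ℝ) : EReal) :=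
              add_le_add h1 h2
          _ = ((ρ imin + lam * (sN imin : ℝ) + ε : ℝ) : EReal) := by
              rw [← EReal.coe_add]; ring_nf
      rw [← EReal.le_of_forall_lt_iff_le]
      intro z hz
      have hzr : ρ imin + lam * (sN imin : ℝ) < z := by exact_mod_cast hz
      have := hεbound (z - (ρ imin + lam * (sN imin : ℝ))) (by linarith)
      simpa using this
    · -- min ≤ iInf
      apply le_iInf
      intro x
      by_cases hxt : φ x = ⊤
      · rw [hxt, EReal.top_add_coe]
        exact le_top
      · have hRkt : R (l0 (B.mulVec x)) ≠ ⊤ := by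
          intro h
          exact hxt (top_le_iff.1 (h ▸ hRle x))
        obtain ⟨j, hjK, hjle, hjR⟩ := key1 (l0 (B.mulVec x)) (hl0m x) hRkt
        set i : Fin (L + 1) := (e.symm ⟨j, hjK⟩).rev with hidef
        have hsNi : sN i = j := by
          rw [hsNdef]
          simp [hidef, Fin.rev_rev]
        have hmin_le : (Finset.univ.inf' Finset.univ_nonempty
            (fun i : Fin (L + 1) => ρ i + lam * (sN i : ℝ)) : ℝ)
              ≤ ρ i + lam * (sN i : ℝ) :=
          Finset.inf'_le _ (Finset.mem_univ i)
        refine le_trans (EReal.coe_le_coe_iff.2 hmin_le) ?_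
        have heq : ((ρ i + lam * (sN i : ℝ) : ℝ) : EReal)
            = R (sN i) + ((lam * (sN i : ℝ) : ℝ) : EReal) := by
          rw [← hρR i, ← EReal.coe_add]
        rw [heq, hsNi]
        have h1 : R j ≤ φ x := le_trans hjR (hRle x)
        have h2 : ((lam * (j : ℝ) : ℝ) : EReal)
            ≤ ((lam * (l0 (B.mulVec x) : ℝ) : ℝ) : EReal) := by
          apply EReal.coe_le_coe_iff.2
          have : (j : ℝ) ≤ (l0 (B.mulVec x) : ℝ) := by exact_mod_cast hjle
          nlinarith
        exact add_le_add h1 h2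
  · -- continuity
    apply Continuous.continuousOn
    exact Continuous.finset_inf'_apply _
      (fun i _ => continuous_const.add (continuous_id.mul continuous_const))
  · -- monotonicity
    intro a _ b _ hab
    apply Finset.le_inf'
    intro i _
    refine le_trans (Finset.inf'_le _ (Finset.mem_univ i)) ?_
    have : (0 : ℝ) ≤ (sN i : ℝ) := by positivity
    nlinarith
  · -- concavity
    refine ⟨convex_Ioi 0, ?_⟩
    intro x _ y _ a b ha hb hab
    apply Finset.le_inf'
    intro i _
    have hx' : Finset.univ.inf' Finset.univ_nonempty
        (fun i : Fin (L + 1) => ρ i + x * (sN i : ℝ)) ≤ ρ i + x * (sN i : ℝ) :=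
      Finset.inf'_le _ (Finset.mem_univ i)
    have hy' : Finset.univ.inf' Finset.univ_nonempty
        (fun i : Fin (L + 1) => ρ i + y * (sN i : ℝ)) ≤ ρ i + y * (sN i : ℝ) :=
      Finset.inf'_le _ (Finset.mem_univ i)
    simp only [smul_eq_mul]
    have hρi : a * ρ i + b * ρ i = ρ i := by rw [← add_mul, hab, one_mul]
    nlinarith [mul_le_mul_of_nonneg_left hx' ha, mul_le_mul_of_nonneg_left hy' hb, hρi]
end
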